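/- Let 0 ≤ l < k ≤ n and let λ = (λ_1, …, λ_n) ∈ Γ_k with λ_1 < 0. Then σ_{k−1}(λ|1)σ_l(λ) − σ_k(λ)σ_{l−1}(λ|1) ≥ (n/k)·((k−l)/(n−l))·(1/(n−k+1)) · Σ_{i=1}^n [σ_{k−1}(λ|i)σ_l(λ) − σ_k(λ)σ_{l−1}(λ|i)]. Since σ_l(λ) > 0, dividing by σ_l(λ)² this is exactly the statement ∂[σ_k(λ)/σ_l(λ)]/∂λ_1 ≥ (n/k)((k−l)/(n−l))(1/(n−k+1)) Σ_{i=1}^n ∂[σ_k(λ)/σ_l(λ)]/∂λ_i, where ∂[σ_k/σ_l]/∂λ_i = [σ_{k−1}(λ|i)σ_l(λ) − σ_k(λ)σ_{l−1}(λ|i)]/σ_l(λ)². (Lemma 2.5, inequality (2.7).) -/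

import Mathlib

open Finset

noncomputable def esymm {n : ℕ} (lam : Fin n → ℝ) (m : ℤ) : ℝ :=
  if m < 0 then 0
  else ∑ s ∈ Finset.powersetCard m.toNat Finset.univ, ∏ i ∈ s, lam i

noncomputable def esymmDel {n : ℕ} (lam : Fin n → ℝ) (i : Fin n) (m : ℤ) : ℝ :=
  if m < 0 then 0
  else ∑ s ∈ Finset.powersetCard m.toNat (Finset.univ.erase i), ∏ j ∈ s, lam j

noncomputable def esymmDelSet {n : ℕ} (lam : Fin n → ℝ) (S : Finset (Fin n)) (m : ℤ) : ℝ :=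
  if m < 0 then 0
  else ∑ s ∈ Finset.powersetCard m.toNat (Finset.univ \ S), ∏ j ∈ s, lam j

def GardingCone (n k : ℕ) : Set (Fin n → ℝ) :=
  {lam | ∀ m : ℕ, 1 ≤ m → m ≤ k → 0 < esymm lam (m : ℤ)}

noncomputable def sigmaMat {n : ℕ} (A : Matrix (Fin n) (Fin n) ℝ) (m : ℤ) : ℝ :=
  if m < 0 then 0
  else ∑ s ∈ Finset.powersetCard m.toNat (Finset.univ : Finset (Fin n)),
    (A.submatrix (fun i : {x : Fin n // x ∈ s} => (i : Fin n))
                 (fun j : {x : Fin n // x ∈ s} => (j : Fin n))).det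

namespace NewtonAux

variable {ι : Type*} [DecidableEq ι]

noncomputable def Es (u : Finset ι) (f : ι → ℝ) (m : ℕ) : ℝ :=
  ∑ s ∈ Finset.powersetCard m u, ∏ i ∈ s, f i

lemma Es_eq_esymm (u : Finset ι) (f : ι → ℝ) (m : ℕ) :
    (u.val.map f).esymm m = Es u f m := Finset.esymm_map_val f u m

lemma Es_zero (u : Finset ι) (f : ι → ℝ) : Es u f 0 = 1 := by
  simp [Es]

lemma Es_card (u : Finset ι) (f : ι → ℝ) : Es u f u.card = ∏ i ∈ u, f i := by
  simp [Es, Finset.powersetCard_self]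

lemma Es_of_card_lt (u : Finset ι) (f : ι → ℝ) {m : ℕ} (h : u.card < m) : Es u f m = 0 := by
  simp [Es, Finset.powersetCard_eq_empty.2 h]

lemma Es_split {u : Finset ι} {i : ι} (hi : i ∈ u) (f : ι → ℝ) (m : ℕ) :
    Es u f (m + 1) = Es (u.erase i) f (m + 1) + f i * Es (u.erase i) f m := by
  classical
  have hins : insert i (u.erase i) = u := Finset.insert_erase hi
  have hnot : i ∉ u.erase i := Finset.notMem_erase i u
  have hsplit : Finset.powersetCard (m+1) u
      = Finset.powersetCard (m+1) (u.erase i) ∪ (Finset.powersetCard m (u.erase i)).image (insert i) := by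
    rw [← Finset.powersetCard_succ_insert hnot, hins]
  rw [Es, hsplit, Finset.sum_union]
  · congr 1
    rw [Finset.sum_image]
    · rw [Es, Finset.mul_sum]
      refine Finset.sum_congr rfl fun s hs => ?_
      rw [Finset.mem_powersetCard] at hs
      have : i ∉ s := fun h => hnot (hs.1 h)
      rw [Finset.prod_insert this]
    · intro s hs t ht hst
      rw [Finset.mem_coe, Finset.mem_powersetCard] at hs ht
      have his : i ∉ s := fun h => hnot (hs.1 h)
      have hit : i ∉ t := fun h => hnot (ht.1 h)
      have := congrArg (Finset.erase · i) hst
      simpa [Finset.erase_insert his, Finset.erase_insert hit] using this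
  · rw [Finset.disjoint_right]
    intro s hs hs'
    rw [Finset.mem_image] at hs
    obtain ⟨t, ht, rfl⟩ := hs
    rw [Finset.mem_powersetCard] at hs'
    exact hnot (hs'.1 (Finset.mem_insert_self i t))

lemma Es_sum_erase (u : Finset ι) (f : ι → ℝ) (m : ℕ) :
    ∑ i ∈ u, Es (u.erase i) f m = ((u.card - m : ℕ) : ℝ) * Es u f m := by
  classical
  have hcount : ∀ i ∈ u, Es (u.erase i) f m
      = ∑ s ∈ (Finset.powersetCard m u).filter (fun s => i ∉ s), ∏ j ∈ s, f j := by
    intro i _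
    rw [Es]
    congr 1
    ext s
    simp [Finset.mem_powersetCard, Finset.subset_erase, and_assoc, and_comm, and_left_comm]
  rw [Finset.sum_congr rfl hcount]
  simp_rw [Finset.sum_filter]
  rw [Finset.sum_comm]
  rw [Es, Finset.mul_sum]
  refine Finset.sum_congr rfl fun s hs => ?_
  rw [Finset.mem_powersetCard] at hs
  rw [Finset.sum_ite, Finset.sum_const_zero, add_zero, Finset.sum_const, nsmul_eq_mul]
  have hf : Finset.filter (fun x => x ∉ s) u = u \ s := (Finset.sdiff_eq_filter u s).symm
  rw [hf, Finset.card_sdiff_of_subset hs.1, hs.2]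

end NewtonAux

namespace NewtonAux2
open NewtonAux

variable {ι : Type*} [DecidableEq ι]

lemma base_newton (u : Finset ι) (f : ι → ℝ) (h2 : 2 ≤ u.card) :
    (u.card : ℝ)^2 * (Es u f (u.card - 2) * Es u f u.card)
      ≤ (u.card.choose 2 : ℝ) * Es u f (u.card - 1) ^ 2 := by
  classical
  set N := u.card with hN
  set b : ι → ℝ := fun i => ∏ j ∈ u.erase i, f j with hb
  have hcard_erase : ∀ i ∈ u, (u.erase i).card = N - 1 := fun i hi => by
    rw [Finset.card_erase_of_mem hi]
  have hb1 : ∑ i ∈ u, b i = Es u f (N - 1) := by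
    have h := Es_sum_erase u f (N - 1)
    have h2' : ∀ i ∈ u, Es (u.erase i) f (N - 1) = b i := by
      intro i hi
      rw [← hcard_erase i hi, Es_card]
    rw [Finset.sum_congr rfl h2'] at h
    rw [h, show N - (N - 1) = 1 by omega, Nat.cast_one, one_mul]
  have hbb : ∀ i ∈ u, ∀ j ∈ u.erase i, b i * b j
      = (∏ x ∈ u, f x) * ∏ x ∈ (u.erase i).erase j, f x := by
    intro i hi j hj
    have h1 : f j * ∏ x ∈ (u.erase i).erase j, f x = b i := Finset.mul_prod_erase _ f hj
    have h2 : f j * b j = ∏ x ∈ u, f x :=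
      Finset.mul_prod_erase u f (Finset.mem_of_mem_erase hj)
    rw [← h1, ← h2]; ring
  have hrow : ∀ i ∈ u, ∑ j ∈ u.erase i, b i * b j
      = (∏ x ∈ u, f x) * Es (u.erase i) f (N - 2) := by
    intro i hi
    rw [Finset.sum_congr rfl (hbb i hi), ← Finset.mul_sum]
    congr 1
    have h := Es_sum_erase (u.erase i) f (N - 2)
    rw [hcard_erase i hi, show (N - 1) - (N - 2) = 1 by omega, Nat.cast_one, one_mul] at h
    rw [← h]
    refine Finset.sum_congr rfl fun j hj => ?_
    have hc : ((u.erase i).erase j).card = N - 2 := by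
      rw [Finset.card_erase_of_mem hj, hcard_erase i hi]
      omega
    rw [← hc, Es_card]
  have hdiag : ∑ i ∈ u, ∑ j ∈ u.erase i, b i * b j = (∑ i ∈ u, b i)^2 - ∑ i ∈ u, b i^2 := by
    have h1 : ∀ i ∈ u, ∑ j ∈ u.erase i, b i * b j = b i * (∑ j ∈ u, b j) - b i^2 := by
      intro i hi
      rw [← Finset.mul_sum, Finset.sum_erase_eq_sub hi]
      ring
    rw [Finset.sum_congr rfl h1, Finset.sum_sub_distrib, ← Finset.sum_mul]
    ring
  have hkey : (∑ i ∈ u, b i)^2 - ∑ i ∈ u, b i^2 = 2 * (Es u f (N - 2) * Es u f N) := by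
    rw [← hdiag, Finset.sum_congr rfl hrow, ← Finset.mul_sum]
    have h := Es_sum_erase u f (N - 2)
    rw [show N - (N - 2) = 2 by omega] at h
    rw [h, ← Es_card u f]
    push_cast
    ring
  have hCS : (∑ i ∈ u, b i)^2 ≤ (N : ℝ) * ∑ i ∈ u, b i^2 := by
    have h := sq_sum_le_card_mul_sum_sq (s := u) (f := b)
    rwa [← hN] at h
  have hNr : (2 : ℝ) ≤ (N : ℝ) := by exact_mod_cast h2
  rw [Nat.cast_choose_two, ← hb1]
  nlinarith [hkey, hCS, sq_nonneg (∑ i ∈ u, b i)]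

end NewtonAux2

namespace NewtonMain
open NewtonAux NewtonAux2

noncomputable def pm (μ : Multiset ℝ) (j : ℕ) : ℝ := μ.esymm j / ((Multiset.card μ).choose j)

lemma choose_id {N i : ℕ} (h : i + 1 ≤ N) :
    N * Nat.choose (N - 1) i = (N - i) * Nat.choose N i := by
  have h1 := Nat.add_one_mul_choose_eq (N - 1) i
  rw [show N - 1 + 1 = N by omega] at h1
  rw [h1, Nat.choose_succ_right_eq N i]
  exact Nat.mul_comm _ _

lemma exists_deriv_multiset (μ : Multiset ℝ) (h1 : 1 ≤ Multiset.card μ) :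
    ∃ ν : Multiset ℝ, Multiset.card ν = Multiset.card μ - 1 ∧
      ∀ j : ℕ, j ≤ Multiset.card μ - 1 →
        (Multiset.card μ : ℝ) * ν.esymm j = ((Multiset.card μ - j : ℕ) : ℝ) * μ.esymm j := by
  classical
  set N := Multiset.card μ with hNdef
  set P : Polynomial ℝ := (μ.map fun a => Polynomial.X - Polynomial.C a).prod with hP
  have hmonic : P.Monic :=
    Polynomial.monic_multiset_prod_of_monic _ _ fun a _ => Polynomial.monic_X_sub_C a
  have hdeg : P.natDegree = N := Polynomial.natDegree_multiset_prod_X_sub_C_eq_card μ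
  have hroots : P.roots = μ := Polynomial.roots_multiset_prod_X_sub_C μ
  set D : Polynomial ℝ := Polynomial.derivative P with hD
  have hcoeffD : D.coeff (N - 1) = N := by
    have hPN : P.coeff N = 1 := by
      rw [← hdeg]
      rw [Polynomial.coeff_natDegree]
      exact hmonic.leadingCoeff
    rw [hD, Polynomial.coeff_derivative, show N - 1 + 1 = N by omega, hPN, one_mul,
      Nat.cast_sub h1]
    push_cast
    ring
  have hDne : D ≠ 0 := by
    intro h
    rw [h, Polynomial.coeff_zero] at hcoeffD
    have hN0 : (N : ℝ) ≠ 0 := by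
      simp only [ne_eq, Nat.cast_eq_zero]
      omega
    exact hN0 hcoeffD.symm
  have hdegD : D.natDegree = N - 1 := by
    refine le_antisymm (by rw [hD]; simpa [hdeg] using Polynomial.natDegree_derivative_le P) ?_
    refine Polynomial.le_natDegree_of_ne_zero ?_
    rw [hcoeffD]
    exact Nat.cast_ne_zero.mpr (by omega)
  have hcards : Multiset.card D.roots = N - 1 := by
    refine le_antisymm (le_trans (Polynomial.card_roots' D) (le_of_eq hdegD)) ?_
    have h := Polynomial.card_roots_le_derivative P
    rw [hroots, ← hD] at h
    omega
  have hlead : D.leadingCoeff = N := by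
    rw [← Polynomial.coeff_natDegree, hdegD, hcoeffD]
  refine ⟨D.roots, hcards, fun j hj => ?_⟩
  have hk1 : (N - 1) - j ≤ D.natDegree := by omega
  have hco := Polynomial.coeff_eq_esymm_roots_of_card (hcards.trans hdegD.symm) hk1
  rw [hlead, hdegD, show (N-1) - ((N-1) - j) = j by omega] at hco
  have hco2 : D.coeff ((N - 1) - j) = P.coeff (N - j) * ((N - j : ℕ) : ℝ) := by
    rw [hD, Polynomial.coeff_derivative, show N - 1 - j + 1 = N - j by omega]
    congr 1
    have hcast : ((N - 1 - j : ℕ) : ℝ) = ((N - j : ℕ) : ℝ) - 1 := by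
      rw [show N - 1 - j = (N - j) - 1 by omega, Nat.cast_sub (by omega : 1 ≤ N - j)]
      simp
    rw [hcast]
    ring
  have hcoP : P.coeff (N - j) = (-1)^j * μ.esymm j := by
    have hle : N - j ≤ Multiset.card μ := by omega
    have := Multiset.prod_X_sub_C_coeff μ hle
    rw [← hP, show Multiset.card μ - (N - j) = j by omega] at this
    exact this
  rw [hco2, hcoP] at hco
  have hneg : ((-1 : ℝ))^j ≠ 0 := pow_ne_zero _ (by norm_num)
  refine mul_left_cancel₀ hneg ?_
  linear_combination -hco

lemma newton_pm_aux (j d : ℕ) (hj : 1 ≤ j) : ∀ μ : Multiset ℝ, Multiset.card μ = j + 1 + d →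
    pm μ (j-1) * pm μ (j+1) ≤ pm μ j ^ 2 := by
  induction d with
  | zero =>
    intro μ hcard
    set lst := μ.toList with hlst
    have hlen : lst.length = j + 1 := by rw [hlst, Multiset.length_toList, hcard]
    have hμval : ((Finset.univ : Finset (Fin lst.length)).val.map lst.get) = μ := by
      rw [Fin.univ_val_map, List.ofFn_get, hlst, Multiset.coe_toList]
    have hes : ∀ m, μ.esymm m = Es Finset.univ lst.get m := fun m => by
      rw [← hμval, Es_eq_esymm]
    have hucard : (Finset.univ : Finset (Fin lst.length)).card = j + 1 := by
      simp [hlen]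
    have hbase := base_newton (Finset.univ : Finset (Fin lst.length)) lst.get (by omega)
    rw [hucard, show j + 1 - 2 = j - 1 by omega, show j + 1 - 1 = j from rfl] at hbase
    rw [← hes, ← hes, ← hes] at hbase
    have hC2 : 0 < ((j+1).choose 2 : ℝ) := by
      exact_mod_cast Nat.choose_pos (by omega)
    have hsymm : (j+1).choose (j-1) = (j+1).choose 2 := by
      rw [show j - 1 = (j + 1) - 2 by omega]
      exact Nat.choose_symm (by omega)
    unfold pm
    rw [hcard, hsymm, Nat.choose_self, Nat.choose_succ_self_right]
    rw [div_mul_div_comm, div_pow, div_le_div_iff₀ (by positivity) (by positivity)]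
    push_cast at hbase ⊢
    linarith [hbase]
  | succ d ih =>
    intro μ hcard
    obtain ⟨ν, hνcard, hνes⟩ := exists_deriv_multiset μ (by omega)
    set N := Multiset.card μ with hN
    have hpmeq : ∀ i, i ≤ N - 1 → pm μ i = pm ν i := by
      intro i hi
      have hN0 : (N : ℝ) ≠ 0 := Nat.cast_ne_zero.mpr (by omega)
      have hccast : (N : ℝ) * ((N-1).choose i : ℝ) = ((N - i : ℕ) : ℝ) * (N.choose i : ℝ) := by
        exact_mod_cast congrArg (Nat.cast (R := ℝ)) (choose_id (by omega : i + 1 ≤ N))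
      have hmain : μ.esymm i * (((N-1).choose i : ℕ) : ℝ) * N
          = ν.esymm i * ((N.choose i : ℕ) : ℝ) * N := by
        linear_combination μ.esymm i * hccast - ((N.choose i : ℕ) : ℝ) * hνes i hi
      have hmain2 := mul_right_cancel₀ hN0 hmain
      unfold pm
      rw [hνcard, ← hN]
      rw [div_eq_div_iff]
      · exact hmain2
      · exact_mod_cast Nat.cast_pos.mpr (Nat.choose_pos (by omega)) |>.ne'
      · exact_mod_cast Nat.cast_pos.mpr (Nat.choose_pos (by omega)) |>.ne'
    rw [hpmeq (j-1) (by omega), hpmeq j (by omega), hpmeq (j+1) (by omega)]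
    exact ih ν (by omega)

theorem newton_pm (μ : Multiset ℝ) (j : ℕ) (hj : 1 ≤ j) (hjc : j + 1 ≤ Multiset.card μ) :
    pm μ (j-1) * pm μ (j+1) ≤ pm μ j ^ 2 :=
  newton_pm_aux j (Multiset.card μ - (j+1)) hj μ (by omega)

end NewtonMain

namespace NewtonChain
open NewtonAux NewtonMain

theorem chain_pm (μ : Multiset ℝ) (K : ℕ) (hK : K ≤ Multiset.card μ)
    (hpos : ∀ m : ℕ, m ≤ K → 0 < μ.esymm m) :
    ∀ a b : ℕ, 1 ≤ a → a ≤ b → b ≤ K → pm μ b * pm μ (a-1) ≤ pm μ (b-1) * pm μ a := by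
  have hpm_pos : ∀ m, m ≤ K → 0 < pm μ m := fun m hm =>
    div_pos (hpos m hm) (by exact_mod_cast Nat.choose_pos (le_trans hm hK))
  intro a b ha hab
  induction b, hab using Nat.le_induction with
  | base =>
    intro _
    exact le_of_eq (mul_comm _ _)
  | succ b hab ih =>
    intro hbK1
    have ihb := ih (by omega)
    have hnew := newton_pm μ b (by omega) (by omega)
    have pb1 := hpm_pos (b-1) (by omega)
    have pb := hpm_pos b (by omega)
    have pa1 : 0 ≤ pm μ (a-1) := (hpm_pos (a-1) (by omega)).le
    have h1 : pm μ (b-1) * pm μ (b+1) * pm μ (a-1) ≤ pm μ b ^ 2 * pm μ (a-1) :=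
      mul_le_mul_of_nonneg_right hnew pa1
    have h2 : pm μ b * (pm μ b * pm μ (a-1)) ≤ pm μ b * (pm μ (b-1) * pm μ a) :=
      mul_le_mul_of_nonneg_left ihb pb.le
    have h3 : pm μ (b-1) * (pm μ (b+1) * pm μ (a-1)) ≤ pm μ (b-1) * (pm μ b * pm μ a) := by
      nlinarith [h1, h2]
    have h4 := le_of_mul_le_mul_left h3 pb1
    simpa using h4

theorem chain_scaled (μ : Multiset ℝ) (K : ℕ) (hK : K ≤ Multiset.card μ)
    (hpos : ∀ m : ℕ, m ≤ K → 0 < μ.esymm m) (a b : ℕ) (ha : 1 ≤ a) (hab : a ≤ b) (hbK : b ≤ K) :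
    (b : ℝ) * ((Multiset.card μ : ℝ) - a + 1) * (μ.esymm b * μ.esymm (a-1))
      ≤ (a : ℝ) * ((Multiset.card μ : ℝ) - b + 1) * (μ.esymm (b-1) * μ.esymm a) := by
  set N := Multiset.card μ with hNdef
  have hchain := chain_pm μ K hK hpos a b ha hab hbK
  have hCb1 : (0:ℝ) < ((N.choose (b-1) : ℕ) : ℝ) := by
    exact_mod_cast Nat.choose_pos (by omega)
  have hCa1 : (0:ℝ) < ((N.choose (a-1) : ℕ) : ℝ) := by
    exact_mod_cast Nat.choose_pos (by omega)
  have hCb : (0:ℝ) < ((N.choose b : ℕ) : ℝ) := by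
    exact_mod_cast Nat.choose_pos (by omega)
  have hCa : (0:ℝ) < ((N.choose a : ℕ) : ℝ) := by
    exact_mod_cast Nat.choose_pos (by omega)
  unfold pm at hchain
  rw [← hNdef, div_mul_div_comm, div_mul_div_comm,
    div_le_div_iff₀ (mul_pos hCb hCa1) (mul_pos hCb1 hCa)] at hchain
  have hrel : ∀ c : ℕ, 1 ≤ c → c ≤ N →
      (c:ℝ) * ((N.choose c : ℕ) : ℝ) = ((N:ℝ) - c + 1) * ((N.choose (c-1) : ℕ) : ℝ) := by
    intro c hc1 hcN
    have h1 := Nat.choose_succ_right_eq N (c-1)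
    rw [show c-1+1 = c by omega] at h1
    have h2 : ((N - (c-1) : ℕ) : ℝ) = (N:ℝ) - c + 1 := by
      rw [Nat.cast_sub (by omega), Nat.cast_sub (by omega)]
      push_cast
      ring
    calc (c:ℝ) * ((N.choose c : ℕ) : ℝ) = ((N.choose c * c : ℕ) : ℝ) := by push_cast; ring
    _ = ((N.choose (c-1) * (N - (c-1)) : ℕ) : ℝ) := by exact_mod_cast congrArg (Nat.cast (R := ℝ)) h1
    _ = ((N:ℝ) - c + 1) * ((N.choose (c-1) : ℕ) : ℝ) := by rw [Nat.cast_mul, h2]; ring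
  have ha_rel := hrel a ha (le_trans hbK hK |>.trans' hab)
  have hb_rel := hrel b (le_trans ha hab) (le_trans hbK hK)
  have habpos : (0:ℝ) < (a:ℝ) * (b:ℝ) := by
    have h : (0:ℕ) < a * b := Nat.mul_pos (by omega) (by omega)
    exact_mod_cast h
  have key1 : (b:ℝ) * ((N:ℝ) - a + 1) * (μ.esymm b * μ.esymm (a-1))
        * (((N.choose (b-1) : ℕ) : ℝ) * ((N.choose (a-1) : ℕ) : ℝ))
      = ((a:ℝ) * (b:ℝ)) * (μ.esymm b * μ.esymm (a-1)
        * (((N.choose (b-1) : ℕ) : ℝ) * ((N.choose a : ℕ) : ℝ))) := by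
    linear_combination (-(b:ℝ) * μ.esymm b * μ.esymm (a-1) * ((N.choose (b-1) : ℕ) : ℝ)) * ha_rel
  have key2 : (a:ℝ) * ((N:ℝ) - b + 1) * (μ.esymm (b-1) * μ.esymm a)
        * (((N.choose (b-1) : ℕ) : ℝ) * ((N.choose (a-1) : ℕ) : ℝ))
      = ((a:ℝ) * (b:ℝ)) * (μ.esymm (b-1) * μ.esymm a
        * (((N.choose b : ℕ) : ℝ) * ((N.choose (a-1) : ℕ) : ℝ))) := by
    linear_combination (-(a:ℝ) * μ.esymm (b-1) * μ.esymm a * ((N.choose (a-1) : ℕ) : ℝ)) * hb_rel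
  have hfin := mul_le_mul_of_nonneg_left hchain habpos.le
  rw [← key1, ← key2] at hfin
  exact le_of_mul_le_mul_right hfin (mul_pos hCb1 hCa1)

end NewtonChain

namespace FinalAlgebra

set_option maxHeartbeats 1000000 in
theorem final_algebra (rn rk rl t A0 A1 A2 B0 B1 B2 : ℝ)
    (hrl0 : 0 ≤ rl) (hlk : rl + 1 ≤ rk) (hkn : rk + 1 ≤ rn)
    (hA0 : 0 < A0) (hA1 : 0 ≤ A1) (hA2 : 0 ≤ A2)
    (hB0 : 0 < B0) (hB1 : 0 < B1) (hB2 : 0 ≤ B2)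
    (ht : t < 0) (hsk : 0 < B0 + t * B1)
    (F1 : rk * (rn - rl) * (B0 * A1) ≤ rl * (rn - rk) * (B1 * A0))
    (F2 : (rn - rl + 1) * (B1 * A2) ≤ (rn - rk + 1) * (B2 * A1)) :
    B1 * A0 - B0 * A1
      ≥ (rn / rk) * ((rk - rl) / (rn - rl)) * (1 / (rn - rk + 1)) *
        ((rn - rk + 1) * ((B1 + t * B2) * (A0 + t * A1))
          - (rn - rl + 1) * ((B0 + t * B1) * (A1 + t * A2))) := by
  have hrk : 0 < rk := by linarith
  have hrnl : 0 < rn - rl := by linarith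
  have hrnk1 : 0 < rn - rk + 1 := by linarith
  have hkl : 0 ≤ rk - rl := by linarith
  have hrn : 0 ≤ rn := by linarith
  set Y : ℝ := (rn - rk + 1) * ((B1 + t * B2) * (A0 + t * A1))
          - (rn - rl + 1) * ((B0 + t * B1) * (A1 + t * A2)) with hY
  rw [ge_iff_le, show (rn / rk) * ((rk - rl) / (rn - rl)) * (1 / (rn - rk + 1))
      = (rn * (rk - rl)) / (rk * (rn - rl) * (rn - rk + 1)) by
    field_simp]
  rw [div_mul_eq_mul_div, div_le_iff₀ (by positivity)]
  -- reduce to 0 ≤ Wt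
  set D : ℝ := B1 * A0 - B0 * A1 with hD0
  have hDnn : 0 ≤ D := by
    have h1 : rl * (rn - rk) ≤ rk * (rn - rl) := by nlinarith
    have h2 : rk * (rn - rl) * (B0 * A1) ≤ rk * (rn - rl) * (B1 * A0) :=
      F1.trans (mul_le_mul_of_nonneg_right h1 (by positivity))
    have h3 : B0 * A1 ≤ B1 * A0 := le_of_mul_le_mul_left h2 (by positivity)
    simp only [hD0]
    linarith
  set W0 : ℝ := rk * (rn - rl) * (rn - rk + 1) * D
      - rn * (rk - rl) * ((rn - rk + 1) * (B1 * A0) - (rn - rl + 1) * (B0 * A1)) with hW0def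
  have hW0 : 0 ≤ W0 := by
    have e1 : 0 ≤ rl * (rn - rk) * (B1 * A0) - rk * (rn - rl) * (B0 * A1) := sub_nonneg.2 F1
    have t1 : 0 ≤ (rn - rk + 1) * (rl * (rn - rk) * (B1 * A0) - rk * (rn - rl) * (B0 * A1)) :=
      mul_nonneg hrnk1.le e1
    have t2 : 0 ≤ rn * (rk - rl) * (rn - rl + 1) * (B0 * A1) := by positivity
    have hid : W0 = (rn - rk + 1) * (rl * (rn - rk) * (B1 * A0) - rk * (rn - rl) * (B0 * A1))
        + rn * (rk - rl) * (rn - rl + 1) * (B0 * A1) := by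
      simp only [hW0def, hD0]; ring
    linarith [hid ▸ add_nonneg t1 t2]
  set Ws : ℝ := rk * (rn - rl) * (rn - rk + 1) * D * B1^2
      - rn * (rk - rl) * (rn - rk + 1) * ((B1^2 - B0 * B2) * D) with hWsdef
  have hWs : 0 ≤ Ws := by
    have hid : Ws = (rn - rk + 1) * D * (rl * (rn - rk) * B1^2 + rn * (rk - rl) * (B0 * B2)) := by
      simp only [hWsdef]; ring
    rw [hid]
    have hx : 0 ≤ rl * (rn - rk) * B1^2 + rn * (rk - rl) * (B0 * B2) := by
      have h1 : 0 ≤ rl * (rn - rk) := mul_nonneg hrl0 (by linarith)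
      have h2 : 0 ≤ rn * (rk - rl) * (B0 * B2) := by positivity
      nlinarith [sq_nonneg B1]
    exact mul_nonneg (mul_nonneg hrnk1.le hDnn) hx
  set Qp : ℝ := -(rn * (rk - rl)) * ((rn - rk + 1) * (B2 * A1) - (rn - rl + 1) * (B1 * A2))
    with hQpdef
  have hQp : Qp ≤ 0 := by
    have e2 : 0 ≤ (rn - rk + 1) * (B2 * A1) - (rn - rl + 1) * (B1 * A2) := sub_nonneg.2 F2
    have : 0 ≤ rn * (rk - rl) := by positivity
    simp only [hQpdef]
    nlinarith
  set Wt : ℝ := D * (rk * (rn - rl) * (rn - rk + 1)) - rn * (rk - rl) * Y with hWtdef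
  have key : B0 * B1^2 * Wt
      = (B0 + t * B1) * B1^2 * W0 + (-t) * B1 * Ws + Qp * B0 * t * (B0 + t * B1) * B1 := by
    simp only [hWtdef, hW0def, hWsdef, hQpdef, hY, hD0]
    ring
  have hrhs : 0 ≤ (B0 + t * B1) * B1^2 * W0 + (-t) * B1 * Ws + Qp * B0 * t * (B0 + t * B1) * B1 := by
    have r1 : 0 ≤ (B0 + t * B1) * B1^2 * W0 := by positivity
    have r2 : 0 ≤ (-t) * B1 * Ws := by
      have hnt : 0 ≤ -t := by linarith
      exact mul_nonneg (mul_nonneg hnt hB1.le) hWs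
    have r3 : 0 ≤ Qp * B0 * t * (B0 + t * B1) * B1 := by
      have hqt : 0 ≤ Qp * t := by nlinarith [hQp, ht.le]
      calc (0:ℝ) ≤ (Qp * t) * (B0 * ((B0 + t * B1) * B1)) := by positivity
      _ = Qp * B0 * t * (B0 + t * B1) * B1 := by ring
    linarith
  have hWt : 0 ≤ Wt := by
    have h := key ▸ hrhs
    have hpos : 0 < B0 * B1^2 := by positivity
    exact nonneg_of_mul_nonneg_right h hpos
  simp only [hWtdef] at hWt
  linarith

end FinalAlgebra

section MainGlue
open Polynomial NewtonAux NewtonMain NewtonChain FinalAlgebra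

set_option maxHeartbeats 1600000 in
/-- Lemma 2.5, inequality (2.7): if 0 ≤ l < k ≤ n, λ ∈ Γ_k and λ₁ < 0, then
σ_{k−1}(λ|1)σ_l(λ) − σ_k(λ)σ_{l−1}(λ|1)
  ≥ (n/k)·((k−l)/(n−l))·(1/(n−k+1)) · Σᵢ [σ_{k−1}(λ|i)σ_l(λ) − σ_k(λ)σ_{l−1}(λ|i)],
i.e. ∂[σ_k/σ_l]/∂λ₁ ≥ (n/k)((k−l)/(n−l))(1/(n−k+1)) Σᵢ ∂[σ_k/σ_l]/∂λᵢ. -/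
theorem deriv_quotient_first_ge (n k l : ℕ) (hlk : l < k) (hkn : k ≤ n)
    (lam : Fin n → ℝ) (hlam : lam ∈ GardingCone n k)
    (hneg : lam ⟨0, by omega⟩ < 0) :
    esymmDel lam ⟨0, by omega⟩ ((k : ℤ) - 1) * esymm lam (l : ℤ)
      - esymm lam (k : ℤ) * esymmDel lam ⟨0, by omega⟩ ((l : ℤ) - 1)
    ≥ ((n : ℝ) / k) * (((k : ℝ) - l) / ((n : ℝ) - l)) * (1 / ((n : ℝ) - k + 1)) *
      ∑ i : Fin n, (esymmDel lam i ((k : ℤ) - 1) * esymm lam (l : ℤ)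
        - esymm lam (k : ℤ) * esymmDel lam i ((l : ℤ) - 1)) := by

  classical
  have hk1 : 1 ≤ k := by omega
  have hn1 : 1 ≤ n := by omega
  set i0 : Fin n := ⟨0, by omega⟩ with hi0
  set t : ℝ := lam i0 with htdef
  -- basic bridges
  have hE : ∀ m : ℕ, esymm lam (m : ℤ) = Es Finset.univ lam m := by
    intro m
    rw [esymm, if_neg (by exact_mod_cast Int.not_lt.mpr (Int.natCast_nonneg m))]
    simp [Es]
  have hEd : ∀ (i : Fin n) (m : ℕ), esymmDel lam i (m : ℤ) = Es (Finset.univ.erase i) lam m := by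
    intro i m
    rw [esymmDel, if_neg (by exact_mod_cast Int.not_lt.mpr (Int.natCast_nonneg m))]
    simp [Es]
  have hEdneg : ∀ (i : Fin n) (m : ℤ), m < 0 → esymmDel lam i m = 0 := by
    intro i m hm
    rw [esymmDel, if_pos hm]
  have hEneg : ∀ m : ℤ, m < 0 → esymm lam m = 0 := by
    intro m hm
    rw [esymm, if_pos hm]
  have hsig : ∀ m : ℕ, 1 ≤ m → m ≤ k → 0 < Es Finset.univ lam m := by
    intro m h1 h2
    rw [← hE]
    exact hlam m h1 h2
  -- positivity of deleted esymm
  have hS : ∀ m : ℕ, m ≤ k → m ≤ n - 1 → 0 < Es (Finset.univ.erase i0) lam m := by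
    intro m
    induction m with
    | zero => intro _ _; rw [Es_zero]; norm_num
    | succ m ih =>
      intro h1 h2
      have hrec := Es_split (Finset.mem_univ i0) lam m
      have h3 := hsig (m+1) (by omega) h1
      have h4 := ih (by omega) (by omega)
      nlinarith [h3, h4, hneg]
  -- exclude k = n
  have hkn' : k ≤ n - 1 := by
    by_contra hcon
    have hkn2 : k = n := by omega
    have h1 := Es_split (Finset.mem_univ i0) lam (n-1)
    rw [show n - 1 + 1 = n by omega] at h1
    have hSn : Es (Finset.univ.erase i0) lam n = 0 := by
      refine Es_of_card_lt _ lam ?_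
      rw [Finset.card_erase_of_mem (Finset.mem_univ i0), Finset.card_univ, Fintype.card_fin]
      omega
    have hSn1 : 0 < Es (Finset.univ.erase i0) lam (n-1) := hS (n-1) (by omega) le_rfl
    have hEn : 0 < Es Finset.univ lam n := hsig n (by omega) (by omega)
    rw [hSn] at h1
    nlinarith [hEn, hSn1, hneg]
  -- multiset
  set μs : Multiset ℝ := ((Finset.univ.erase i0).val.map lam) with hμsdef
  have hcardμ : Multiset.card μs = n - 1 := by
    rw [hμsdef, Multiset.card_map]
    have : (Finset.univ.erase i0).card = n - 1 := by
      rw [Finset.card_erase_of_mem (Finset.mem_univ i0), Finset.card_univ, Fintype.card_fin]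
    exact_mod_cast this
  have hesμ : ∀ m : ℕ, μs.esymm m = Es (Finset.univ.erase i0) lam m := fun m =>
    Es_eq_esymm _ lam m
  have hposμ : ∀ m : ℕ, m ≤ k → 0 < μs.esymm m := fun m hm => by
    rw [hesμ m]; exact hS m hm (le_trans hm hkn')
  -- abbreviations
  set A0 : ℝ := Es (Finset.univ.erase i0) lam l with hA0def
  set A1 : ℝ := esymmDel lam i0 ((l:ℤ) - 1) with hA1def
  set A2 : ℝ := esymmDel lam i0 ((l:ℤ) - 2) with hA2def
  set B0 : ℝ := Es (Finset.univ.erase i0) lam k with hB0def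
  set B1 : ℝ := Es (Finset.univ.erase i0) lam (k-1) with hB1def
  set B2 : ℝ := esymmDel lam i0 ((k:ℤ) - 2) with hB2def
  have hA1eq : 1 ≤ l → A1 = Es (Finset.univ.erase i0) lam (l-1) := by
    intro hl
    rw [hA1def, show (l:ℤ) - 1 = ((l-1 : ℕ) : ℤ) by push_cast [hl]; ring, hEd]
  have hA1zero : l = 0 → A1 = 0 := by
    intro hl
    rw [hA1def, hEdneg _ _ (by omega)]
  have hA2eq : 2 ≤ l → A2 = Es (Finset.univ.erase i0) lam (l-2) := by
    intro hl
    rw [hA2def, show (l:ℤ) - 2 = ((l-2 : ℕ) : ℤ) by push_cast [hl]; ring, hEd]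
  have hA2zero : l ≤ 1 → A2 = 0 := by
    intro hl
    rw [hA2def, hEdneg _ _ (by omega)]
  have hB2eq : 2 ≤ k → B2 = Es (Finset.univ.erase i0) lam (k-2) := by
    intro hkk
    rw [hB2def, show (k:ℤ) - 2 = ((k-2 : ℕ) : ℤ) by push_cast [hkk]; ring, hEd]
  have hB2zero : k = 1 → B2 = 0 := by
    intro hkk
    rw [hB2def, hEdneg _ _ (by omega)]
  -- sign facts
  have hA0pos : 0 < A0 := hS l (by omega) (by omega)
  have hA1nn : 0 ≤ A1 := by
    rcases Nat.eq_zero_or_pos l with h | h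
    · rw [hA1zero h]
    · rw [hA1eq h]; exact (hS (l-1) (by omega) (by omega)).le
  have hA2nn : 0 ≤ A2 := by
    rcases le_or_gt l 1 with h | h
    · rw [hA2zero h]
    · rw [hA2eq h]; exact (hS (l-2) (by omega) (by omega)).le
  have hB0pos : 0 < B0 := hS k le_rfl hkn'
  have hB1pos : 0 < B1 := hS (k-1) (by omega) (by omega)
  have hB2nn : 0 ≤ B2 := by
    rcases le_or_gt 2 k with h | h
    · rw [hB2eq h]; exact (hS (k-2) (by omega) (by omega)).le
    · rw [hB2zero (by omega)]
  -- recurrence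
  have hrecE : ∀ m : ℕ, Es Finset.univ lam m
      = Es (Finset.univ.erase i0) lam m + t * esymmDel lam i0 ((m:ℤ) - 1) := by
    intro m
    cases m with
    | zero => rw [Es_zero, Es_zero, hEdneg _ _ (by omega)]; ring
    | succ m =>
      rw [Es_split (Finset.mem_univ i0) lam m,
        show ((m+1 : ℕ) : ℤ) - 1 = ((m : ℕ) : ℤ) by push_cast; ring, hEd]
  -- esymm values via recurrence
  have hfoldB1 : esymmDel lam i0 ((k:ℤ) - 1) = B1 := by
    rw [show (k:ℤ) - 1 = ((k-1 : ℕ) : ℤ) by push_cast [hk1]; ring, hEd, ← hB1def]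
  have hesk : esymm lam (k:ℤ) = B0 + t * B1 := by
    rw [hE k, hrecE k, ← hB0def, hfoldB1]
  have hesl : esymm lam (l:ℤ) = A0 + t * A1 := by
    rw [hE l, hrecE l, ← hA0def, ← hA1def]
  have hesk1 : esymm lam ((k - 1 : ℕ) : ℤ) = B1 + t * B2 := by
    rw [hE (k-1), hrecE (k-1), ← hB1def,
      show ((k-1 : ℕ) : ℤ) - 1 = (k:ℤ) - 2 by push_cast [hk1]; ring, ← hB2def]
  have hesl1 : esymm lam ((l:ℤ) - 1) = A1 + t * A2 := by
    rcases Nat.eq_zero_or_pos l with h0 | h1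
    · rw [hEneg _ (by omega), hA1zero h0, hA2zero (by omega)]
      ring
    · rw [show (l:ℤ) - 1 = ((l-1 : ℕ) : ℤ) by push_cast [h1]; ring, hE (l-1), hrecE (l-1),
        ← hA1eq h1, show ((l-1 : ℕ) : ℤ) - 1 = (l:ℤ) - 2 by push_cast [h1]; ring, ← hA2def]
  -- sums
  have hcardu : (Finset.univ : Finset (Fin n)).card = n := by
    rw [Finset.card_univ, Fintype.card_fin]
  have hsum1 : ∑ i : Fin n, esymmDel lam i ((k:ℤ) - 1) = ((n:ℝ) - k + 1) * (B1 + t * B2) := by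
    simp_rw [show (k:ℤ) - 1 = ((k-1 : ℕ) : ℤ) by push_cast [hk1]; ring, hEd]
    rw [Es_sum_erase Finset.univ lam (k-1), hcardu, ← hE (k-1), hesk1]
    congr 1
    rw [Nat.cast_sub (by omega)]
    push_cast [hk1]
    ring
  have hsum2 : ∑ i : Fin n, esymmDel lam i ((l:ℤ) - 1) = ((n:ℝ) - l + 1) * (A1 + t * A2) := by
    rcases Nat.eq_zero_or_pos l with h0 | h1
    · have hz : ∀ i : Fin n, esymmDel lam i ((l:ℤ) - 1) = 0 := fun i => hEdneg i _ (by omega)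
      rw [Finset.sum_congr rfl (fun i _ => hz i), Finset.sum_const_zero, hA1zero h0,
        hA2zero (by omega)]
      ring
    · simp_rw [show (l:ℤ) - 1 = ((l-1 : ℕ) : ℤ) by push_cast [h1]; ring, hEd]
      rw [Es_sum_erase Finset.univ lam (l-1), hcardu, ← hE (l-1),
        show ((l-1 : ℕ) : ℤ) = (l:ℤ) - 1 by push_cast [h1]; ring, hesl1]
      congr 1
      rw [Nat.cast_sub (by omega)]
      push_cast [h1]
      ring
  -- Newton chain inequalities
  have F1 : (k:ℝ) * ((n:ℝ) - l) * (B0 * A1) ≤ (l:ℝ) * ((n:ℝ) - k) * (B1 * A0) := by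
    rcases Nat.eq_zero_or_pos l with h0 | h1
    · rw [hA1zero h0, h0]
      norm_num
    · have hc := chain_scaled μs k (by rw [hcardμ]; omega) hposμ l k h1 (le_of_lt hlk) le_rfl
      rw [hcardμ] at hc
      simp only [hesμ] at hc
      rw [← hB0def, ← hB1def, ← hA0def, ← hA1eq h1] at hc
      have hcast : ((n - 1 : ℕ) : ℝ) = (n:ℝ) - 1 := by
        rw [Nat.cast_sub hn1]; norm_num
      rw [hcast] at hc
      linarith only [hc]
  have hknR : (k:ℝ) + 1 ≤ (n:ℝ) := by
    have : k + 1 ≤ n := by omega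
    exact_mod_cast this
  have hlkR : (l:ℝ) + 1 ≤ (k:ℝ) := by exact_mod_cast hlk
  have F2 : ((n:ℝ) - l + 1) * (B1 * A2) ≤ ((n:ℝ) - k + 1) * (B2 * A1) := by
    rcases le_or_gt l 1 with h0 | h1
    · rw [hA2zero h0]
      have h2 : 0 ≤ ((n:ℝ) - k + 1) * (B2 * A1) :=
        mul_nonneg (by linarith) (mul_nonneg hB2nn hA1nn)
      linarith
    · have hk3 : 3 ≤ k := by omega
      have hc := chain_scaled μs k (by rw [hcardμ]; omega) hposμ (l-1) (k-1)
        (by omega) (by omega) (by omega)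
      rw [hcardμ, show (k-1)-1 = k-2 by omega, show (l-1)-1 = l-2 by omega] at hc
      simp only [hesμ] at hc
      rw [← hB1def, ← hA2eq h1, ← hB2eq (by omega), ← hA1eq (by omega)] at hc
      have hcast : ((n - 1 : ℕ) : ℝ) = (n:ℝ) - 1 := by
        rw [Nat.cast_sub hn1]; norm_num
      have hcast2 : ((l - 1 : ℕ) : ℝ) = (l:ℝ) - 1 := by
        rw [Nat.cast_sub (by omega)]; norm_num
      have hcast3 : ((k - 1 : ℕ) : ℝ) = (k:ℝ) - 1 := by
        rw [Nat.cast_sub (by omega)]; norm_num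
      rw [hcast, hcast2, hcast3] at hc
      -- hc : (k-1) * ((n-1) - (l-1) + 1) * (B1 * A2) ≤ (l-1) * ((n-1) - (k-1) + 1) * (B2 * A1)
      have hmn : 0 ≤ ((n:ℝ) - k + 1) * (B2 * A1) :=
        mul_nonneg (by linarith only [hknR]) (mul_nonneg hB2nn hA1nn)
      have hlek : ((l:ℝ) - 1) ≤ ((k:ℝ) - 1) := by linarith only [hlkR]
      have hstep : ((l:ℝ) - 1) * (((n:ℝ) - k + 1) * (B2 * A1))
          ≤ ((k:ℝ) - 1) * (((n:ℝ) - k + 1) * (B2 * A1)) :=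
        mul_le_mul_of_nonneg_right hlek hmn
      have hcomb : ((k:ℝ) - 1) * (((n:ℝ) - l + 1) * (B1 * A2))
          ≤ ((k:ℝ) - 1) * (((n:ℝ) - k + 1) * (B2 * A1)) := by
        have h' : ((k:ℝ) - 1) * (((n:ℝ) - l + 1) * (B1 * A2))
            ≤ ((l:ℝ) - 1) * (((n:ℝ) - k + 1) * (B2 * A1)) := by
          linarith only [hc]
        linarith only [h', hstep]
      have hkpos : (0:ℝ) < (k:ℝ) - 1 := by
        have : (3:ℝ) ≤ (k:ℝ) := by exact_mod_cast hk3
        linarith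
      exact le_of_mul_le_mul_left hcomb hkpos
  have hsk : 0 < B0 + t * B1 := by
    rw [← hesk]
    exact hlam k hk1 le_rfl
  -- final assembly
  have HF := final_algebra (n:ℝ) (k:ℝ) (l:ℝ) t A0 A1 A2 B0 B1 B2
    (by positivity) hlkR hknR hA0pos hA1nn hA2nn hB0pos hB1pos hB2nn hneg hsk F1 F2
  rw [Finset.sum_sub_distrib, ← Finset.sum_mul, ← Finset.mul_sum, hsum1, hsum2, hesl, hesk,
    hfoldB1]
  rw [ge_iff_le] at HF ⊢
  calc ((n:ℝ) / k) * (((k:ℝ) - l) / ((n:ℝ) - l)) * (1 / ((n:ℝ) - k + 1)) *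
        (((n:ℝ) - k + 1) * (B1 + t * B2) * (A0 + t * A1)
          - (B0 + t * B1) * (((n:ℝ) - l + 1) * (A1 + t * A2)))
      = ((n:ℝ) / k) * (((k:ℝ) - l) / ((n:ℝ) - l)) * (1 / ((n:ℝ) - k + 1)) *
        (((n:ℝ) - k + 1) * ((B1 + t * B2) * (A0 + t * A1))
          - ((n:ℝ) - l + 1) * ((B0 + t * B1) * (A1 + t * A2))) := by ring
    _ ≤ B1 * A0 - B0 * A1 := HF
    _ = B1 * (A0 + t * A1) - (B0 + t * B1) * A1 := by ring


end MainGlue
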